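/- If H is a pure subgroup of bounded exponent of an abelian group G, then H is a direct summand of G. -/

import Mathlib

/-- A subgroup `H` of `G` is pure if every equation `n • g = k` with `k ∈ H`
solvable in `G` is solvable in `H`. -/
def IsPureSubgroup {G : Type*} [AddCommGroup G] (H : AddSubgroup G) : Prop :=
  ∀ n : ℕ, 0 < n → ∀ k ∈ H, (∃ g : G, n • g = k) → ∃ h ∈ H, n • h = k

private lemma key_lemma {A : Type*} [AddCommGroup A] (n : ℕ) (hn : 0 < n)
    (hA : ∀ a : A, n • a = 0) (HH : AddSubgroup A)
    (hp : ∀ (m : ℕ), ∀ k ∈ HH, (∃ g : A, m • g = k) → ∃ h ∈ HH, m • h = k)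
    (hne : ∃ y : A, y ∉ HH) :
    ∃ z : A, z ∉ HH ∧ (∀ c : ℤ, c • z ∈ HH → c • z = 0) ∧
      ∀ (m : ℕ) (y hh : A) (c : ℤ), hh ∈ HH → (m : ℤ) • y = hh + c • z →
        ∃ h' ∈ HH, (m : ℤ) • y - (m : ℤ) • h' = c • z := by
  classical
  obtain ⟨y₀, hy₀⟩ := hne
  have hEx : ∃ l : ℕ, 0 < l ∧ l • y₀ ∈ HH := ⟨n, hn, by rw [hA y₀]; exact zero_mem _⟩
  set l := Nat.find hEx with hl_def
  obtain ⟨hl0, hlH⟩ := Nat.find_spec hEx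
  have hl1 : 1 < l := by
    rcases Nat.lt_or_ge l 2 with h | h
    · exfalso
      have : l = 1 := by omega
      apply hy₀; rw [← one_smul ℕ y₀, ← this]; exact hlH
    · omega
  set p := l.minFac with hp_def
  have hpp : p.Prime := Nat.minFac_prime (by omega)
  have hpl : p ∣ l := Nat.minFac_dvd l
  have hppz : Prime (p : ℤ) := Nat.prime_iff_prime_int.mp hpp
  set y₁ := (l / p) • y₀ with hy₁def
  have hpy₁ : p • y₁ = l • y₀ := by rw [hy₁def, smul_smul, Nat.mul_div_cancel' hpl]
  have hy₁ : y₁ ∉ HH := by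
    intro hmem
    have hlp0 : 0 < l / p := Nat.div_pos (Nat.minFac_le hl0) hpp.pos
    have h1 := Nat.find_min' hEx ⟨hlp0, hmem⟩
    have h2 : l / p < l := Nat.div_lt_self hl0 hpp.one_lt
    omega
  obtain ⟨h₀, hh₀H, hh₀⟩ := hp p (p • y₁) (by rw [hpy₁]; exact hlH) ⟨y₁, rfl⟩
  set z₀ := y₁ - h₀ with hz₀def
  have hz₀p : p • z₀ = 0 := by rw [hz₀def, smul_sub, hh₀, sub_self]
  have hz₀H : z₀ ∉ HH := by
    intro hz
    apply hy₁
    have := add_mem hz hh₀H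
    simpa [hz₀def] using this
  set v := n.factorization p with hvdef
  have hcopn : ¬ p ∣ n / p ^ v := Nat.not_dvd_ordCompl hpp hn.ne'
  -- elements of order p divisible by p^v are zero
  have topH : ∀ w : A, p • w = 0 → (∃ g : A, p ^ v • g = w) → w = 0 := by
    rintro w hw ⟨g, rfl⟩
    set m₀ := n / p ^ v with hm₀def
    have hm₀ : p ^ v * m₀ = n := Nat.ordProj_mul_ordCompl_eq_self n p
    have hmw : m₀ • (p ^ v • g) = 0 := by
      rw [smul_smul, mul_comm, hm₀, hA]
    have hco : IsCoprime (p : ℤ) (m₀ : ℤ) :=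
      hppz.coprime_iff_not_dvd.mpr (fun hd => hcopn (Int.ofNat_dvd.mp hd))
    obtain ⟨a, b, hab⟩ := hco
    have e1 : (p : ℤ) • (p ^ v • g) = 0 := by rw [natCast_zsmul, hw]
    have e2 : (m₀ : ℤ) • (p ^ v • g) = 0 := by rw [natCast_zsmul, hmw]
    calc p ^ v • g = ((a * p + b * m₀) : ℤ) • (p ^ v • g) := by rw [hab, one_zsmul]
      _ = a • ((p:ℤ) • (p ^ v • g)) + b • ((m₀:ℤ) • (p ^ v • g)) := by
          rw [add_smul, mul_smul, mul_smul]
      _ = 0 := by rw [e1, e2, smul_zero, smul_zero, add_zero]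
  -- the candidates and maximal height
  set P : ℕ → Prop := fun j => ∃ w : A, p • w = 0 ∧ w ∉ HH ∧ ∃ g : A, p ^ j • g = w with hPdef
  have hP0 : P 0 := ⟨z₀, hz₀p, hz₀H, z₀, by rw [pow_zero, one_smul]⟩
  set k := Nat.findGreatest P v with hkdef
  have hk : P k := Nat.findGreatest_spec (Nat.zero_le v) hP0
  have hkv : k ≤ v := Nat.findGreatest_le v
  have hkltv : k < v := by
    rcases Nat.lt_or_ge k v with h | h
    · exact h
    · exfalso
      have hkv' : k = v := le_antisymm hkv h
      obtain ⟨w, hw1, hw2, hw3⟩ := hk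
      rw [hkv'] at hw3
      exact hw2 (by rw [topH w hw1 hw3]; exact zero_mem _)
  have hM : ∀ w : A, p • w = 0 → (∃ g : A, p ^ (k+1) • g = w) → w ∈ HH := by
    intro w hw hg
    by_contra hwH
    exact Nat.findGreatest_is_greatest (lt_add_one k) (by omega) ⟨w, hw, hwH, hg⟩
  obtain ⟨z, hzp, hzH, gz, hgz⟩ := hk
  have hpz : (p : ℤ) • z = 0 := by rw [natCast_zsmul, hzp]
  -- ⟨z⟩ ∩ HH = 0
  have hzmul : ∀ c : ℤ, c • z ∈ HH → c • z = 0 := by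
    intro c hc
    by_cases hdvd : (p : ℤ) ∣ c
    · obtain ⟨t, rfl⟩ := hdvd
      rw [mul_comm, mul_smul, hpz, smul_zero]
    · exfalso
      apply hzH
      obtain ⟨a, b, hab⟩ := hppz.coprime_iff_not_dvd.mpr hdvd
      have : z = a • ((p:ℤ) • z) + b • (c • z) := by
        rw [← mul_smul, ← mul_smul, ← add_smul, hab, one_zsmul]
      rw [this, hpz, smul_zero, zero_add]
      exact AddSubgroup.zsmul_mem _ hc b
  refine ⟨z, hzH, hzmul, ?_⟩
  intro m y hh c hhH heq
  by_cases hm0 : m = 0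
  · subst hm0
    have h0 : (0:ℤ) • y = hh + c • z := by exact_mod_cast heq
    rw [zero_zsmul] at h0
    have hcz : c • z ∈ HH := by
      have : c • z = -hh := by rw [eq_neg_iff_add_eq_zero, add_comm, ← h0]
      rw [this]; exact neg_mem hhH
    have hcz0 := hzmul c hcz
    refine ⟨0, zero_mem _, ?_⟩
    push_cast
    rw [zero_zsmul, zero_zsmul, sub_zero, hcz0]
  have hm : 0 < m := Nat.pos_of_ne_zero hm0
  -- step 1 : kill p on hh
  have key1 : ((p * m : ℕ) : ℤ) • y = ((p : ℕ) : ℤ) • hh := by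
    push_cast
    rw [mul_smul, heq, smul_add, smul_comm (p:ℤ) c z, hpz, smul_zero, add_zero]
  have key1' : (p * m) • y = p • hh := by
    rw [← natCast_zsmul y (p*m), ← natCast_zsmul hh p, key1]
  obtain ⟨h₁, hh₁H, hh₁⟩ := hp (p * m) (p • hh) (AddSubgroup.nsmul_mem _ hhH p) ⟨y, key1'⟩
  set h₂ := hh - (m : ℤ) • h₁ with hh₂def
  have hh₂H : h₂ ∈ HH := sub_mem hhH (AddSubgroup.zsmul_mem _ hh₁H _)
  have hpm : ((p:ℤ) * (m:ℤ)) • h₁ = (p:ℤ) • hh := by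
    rw [← Nat.cast_mul, natCast_zsmul, natCast_zsmul, hh₁]
  have hph₂ : (p : ℤ) • h₂ = 0 := by
    rw [hh₂def, smul_sub, ← mul_smul, hpm, sub_self]
  have hph₂' : p • h₂ = 0 := by rw [← natCast_zsmul h₂ p, hph₂]
  set u := h₂ + c • z with hudef
  have huy : u = (m : ℤ) • (y - h₁) := by
    rw [hudef, hh₂def, smul_sub, heq]; abel
  -- u is divisible by p^β
  set b := m.factorization p with hbdef
  set β := min b v with hβdef
  have hβb : β ≤ b := min_le_left _ _
  have hub : ∃ g : A, p ^ β • g = u := by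
    refine ⟨(p ^ (b - β) * (m / p ^ b)) • (y - h₁), ?_⟩
    rw [smul_smul, ← mul_assoc, ← pow_add]
    have hββ : β + (b - β) = b := by omega
    rw [hββ, Nat.ordProj_mul_ordCompl_eq_self m p, ← natCast_zsmul, ← huy]
  obtain ⟨g', hg'⟩ := hub
  -- h₂ is divisible by p^β inside HH
  have hdiv : ∃ h₄ ∈ HH, p ^ β • h₄ = h₂ := by
    by_cases hcase : β ≤ k
    · have hzdiv : ∃ w : A, p ^ β • w = c • z := by
        refine ⟨c • (p ^ (k - β) • gz), ?_⟩
        rw [smul_comm, smul_smul, ← pow_add]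
        have : β + (k - β) = k := by omega
        rw [this, hgz]
      obtain ⟨w, hw⟩ := hzdiv
      apply hp (p ^ β) h₂ hh₂H
      exact ⟨g' - w, by rw [smul_sub, hg', hw, hudef]; abel⟩
    · push_neg at hcase
      have huH : u ∈ HH := by
        apply hM u (by rw [← natCast_zsmul u p]; rw [hudef]; rw [← hudef]
                       rw [natCast_zsmul]
                       rw [hudef, smul_add, hph₂', zero_add, smul_comm, hzp, smul_zero])
        refine ⟨p ^ (β - (k+1)) • g', ?_⟩
        rw [smul_smul, ← pow_add]
        have : k + 1 + (β - (k + 1)) = β := by omega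
        rw [this, hg']
      have hczH : c • z ∈ HH := by
        have : c • z = u - h₂ := by rw [hudef]; abel
        rw [this]; exact sub_mem huH hh₂H
      have hcz0 := hzmul c hczH
      apply hp (p ^ β) h₂ hh₂H
      exact ⟨g', by rw [hg', hudef, hcz0, add_zero]⟩
  obtain ⟨h₄, hh₄H, hh₄⟩ := hdiv
  have hp1 : p ^ (β + 1) • h₄ = 0 := by
    rw [pow_succ, mul_comm, mul_smul, hh₄, hph₂']
  -- transfer divisibility to m using gcd
  set d := Nat.gcd m n with hddef
  have hd0 : 0 < d := Nat.gcd_pos_of_pos_right m hn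
  have hβd : d.factorization p = β := by
    rw [hddef, Nat.factorization_gcd hm0 hn.ne']
    simp [Finsupp.inf_apply, hbdef, hvdef, hβdef]
  have hpβd : p ^ β ∣ d := by rw [← hβd]; exact Nat.ordProj_dvd d p
  set d₁ := d / p ^ β with hd₁def
  have hdd : p ^ β * d₁ = d := Nat.mul_div_cancel' hpβd
  have hpd₁ : ¬ p ∣ d₁ := by
    have h := Nat.not_dvd_ordCompl hpp hd0.ne'
    rw [hβd] at h
    exact h
  have hco : IsCoprime (p : ℤ) (d₁ : ℤ) :=
    hppz.coprime_iff_not_dvd.mpr (fun hd => hpd₁ (Int.ofNat_dvd.mp hd))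
  obtain ⟨a, b', hab⟩ := hco
  have hd₂ : (d : ℤ) • (b' • h₄) = h₂ := by
    have e1 : ((p ^ β : ℕ) : ℤ) • h₄ = h₂ := by rw [natCast_zsmul, hh₄]
    have e2 : ((p ^ (β+1) : ℕ) : ℤ) • h₄ = 0 := by rw [natCast_zsmul, hp1]
    have hcalc : (d : ℤ) * b' = ((p ^ β : ℕ) : ℤ) - a * ((p ^ (β+1) : ℕ) : ℤ) := by
      have hddz : ((p : ℤ)) ^ β * (d₁ : ℤ) = (d : ℤ) := by exact_mod_cast hdd
      push_cast
      linear_combination ((p:ℤ)^β) * hab - b' * hddz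
    rw [smul_smul, hcalc, sub_smul, mul_smul, e1, e2, smul_zero, sub_zero]
  have hgcd := Nat.gcd_eq_gcd_ab m n
  set x := b' • h₄ with hxdef
  have hnx : (n : ℤ) • x = 0 := by rw [natCast_zsmul, hA]
  have final : (m : ℤ) • ((Nat.gcdA m n) • x) = h₂ := by
    have hma : (m : ℤ) * (Nat.gcdA m n) = (d : ℤ) - (n : ℤ) * (Nat.gcdB m n) := by
      rw [hddef]; push_cast [hgcd]; ring
    rw [smul_smul, hma, sub_smul, mul_comm ((n:ℤ)), mul_smul, hnx, smul_zero, sub_zero, hd₂]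
  refine ⟨h₁ + (Nat.gcdA m n) • x, add_mem hh₁H
    (AddSubgroup.zsmul_mem _ (AddSubgroup.zsmul_mem _ hh₄H _) _), ?_⟩
  rw [smul_add, final]
  have hhh : hh = h₂ + (m : ℤ) • h₁ := by rw [hh₂def]; abel
  rw [heq, hhh]; abel

theorem stmt_6 (G : Type*) [AddCommGroup G] (H : AddSubgroup G)
    (hpure : IsPureSubgroup H)
    (hbdd : ∃ n : ℕ, 0 < n ∧ ∀ h ∈ H, n • h = 0) :
    ∃ K : AddSubgroup G, IsCompl H K := by
  classical
  obtain ⟨n, hn, hbd⟩ := hbdd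
  have hp : ∀ m : ℕ, ∀ k ∈ H, (∃ g : G, m • g = k) → ∃ h ∈ H, m • h = k := by
    intro m k hk hg
    rcases Nat.eq_zero_or_pos m with rfl | hm
    · obtain ⟨g, hg⟩ := hg
      exact ⟨0, zero_mem _, by rw [← hg, zero_smul, zero_smul]⟩
    · exact hpure m hm k hk hg
  set 𝒮 : Set (AddSubgroup G) :=
    {K | (∀ g : G, n • g ∈ K) ∧ (∀ x ∈ K, x ∈ H → x = 0) ∧
      ∀ (m : ℕ) (y h : G), h ∈ H → m • y - h ∈ K → ∃ h' ∈ H, m • y - m • h' ∈ K} with h𝒮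
  have hK₀ : ∃ K₀ : AddSubgroup G, K₀ ∈ 𝒮 := by
    refine ⟨{ carrier := {x | ∃ g : G, n • g = x}
              zero_mem' := ⟨0, smul_zero n⟩
              add_mem' := ?_
              neg_mem' := ?_ }, ?_, ?_, ?_⟩
    · rintro a b ⟨ga, rfl⟩ ⟨gb, rfl⟩
      exact ⟨ga + gb, smul_add n ga gb⟩
    · rintro a ⟨ga, rfl⟩
      exact ⟨-ga, smul_neg n ga⟩
    · intro g; exact ⟨g, rfl⟩
    · rintro x ⟨g, rfl⟩ hxH
      obtain ⟨h, hhH, hh⟩ := hp n (n • g) hxH ⟨g, rfl⟩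
      rw [← hh, hbd h hhH]
    · rintro m y h hH ⟨g, hg⟩
      -- hg : n • g = m • y - h
      rcases Nat.eq_zero_or_pos m with rfl | hm
      · exact ⟨0, zero_mem _, by rw [zero_smul, zero_smul, sub_zero]; exact zero_mem _⟩
      set d := Nat.gcd m n with hddef
      have hd0 : 0 < d := Nat.gcd_pos_of_pos_right m hn
      have hdm : d ∣ m := Nat.gcd_dvd_left m n
      have hdn : d ∣ n := Nat.gcd_dvd_right m n
      have hdvd : ∃ w : G, d • w = h := by
        refine ⟨(m / d) • y - (n / d) • g, ?_⟩
        rw [smul_sub, smul_smul, smul_smul, Nat.mul_div_cancel' hdm,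
          Nat.mul_div_cancel' hdn, hg]
        abel
      obtain ⟨h₁, hh₁H, hh₁⟩ := hp d h hH hdvd
      have hgcd := Nat.gcd_eq_gcd_ab m n
      refine ⟨(Nat.gcdA m n) • h₁, AddSubgroup.zsmul_mem _ hh₁H _, ?_⟩
      have hnh₁ : (n : ℤ) • h₁ = 0 := by rw [natCast_zsmul, hbd h₁ hh₁H]
      have hdh₁ : (d : ℤ) • h₁ = h := by rw [natCast_zsmul, hh₁]
      have hmh : m • ((Nat.gcdA m n) • h₁) = h := by
        rw [← natCast_zsmul _ m, smul_smul]
        have hma : (m : ℤ) * (Nat.gcdA m n) = (d : ℤ) - (n : ℤ) * (Nat.gcdB m n) := by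
          rw [hddef]; push_cast [hgcd]; ring
        rw [hma, sub_smul, mul_comm ((n:ℤ)), mul_smul, hnh₁, smul_zero, sub_zero, hdh₁]
      rw [hmh, ← hg]
      exact ⟨g, rfl⟩
  obtain ⟨K₀, hK₀mem⟩ := hK₀
  obtain ⟨K, -, hKmax⟩ := zorn_le_nonempty₀ 𝒮 (by
    intro c hc𝒮 hchain K' hK'c
    refine ⟨sSup c, ?_, fun z hz => le_sSup hz⟩
    have hne : c.Nonempty := ⟨K', hK'c⟩
    have hdir := hchain.directedOn
    have hmem : ∀ x : G, x ∈ sSup c ↔ ∃ s ∈ c, x ∈ s := fun x =>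
      AddSubgroup.mem_sSup_of_directedOn hne hdir
    refine ⟨?_, ?_, ?_⟩
    · intro g; exact (hmem _).mpr ⟨K', hK'c, (hc𝒮 hK'c).1 g⟩
    · intro x hx hxH
      obtain ⟨s, hs, hxs⟩ := (hmem x).mp hx
      exact (hc𝒮 hs).2.1 x hxs hxH
    · intro m y h hH hK
      obtain ⟨s, hs, hxs⟩ := (hmem _).mp hK
      obtain ⟨h', hh'H, hh'⟩ := (hc𝒮 hs).2.2 m y h hH hxs
      exact ⟨h', hh'H, (hmem _).mpr ⟨s, hs, hh'⟩⟩) K₀ hK₀mem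
  have hK := hKmax.prop
  refine ⟨K, isCompl_iff.mpr ⟨?_, ?_⟩⟩
  · rw [AddSubgroup.disjoint_def]
    intro x hxH hxK
    exact hK.2.1 x hxK hxH
  · rw [codisjoint_iff]
    by_contra htop
    have hex : ∃ y : G, y ∉ H ⊔ K := by
      by_contra hall
      push_neg at hall
      exact htop ((AddSubgroup.eq_top_iff' (H ⊔ K)).mpr hall)
    obtain ⟨w, hw⟩ := hex
    set π := QuotientAddGroup.mk' K with hπdef
    set HH : AddSubgroup (G ⧸ K) := H.map π with hHHdef
    have hπ0 : ∀ x : G, π x = 0 ↔ x ∈ K := by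
      intro x
      exact QuotientAddGroup.eq_zero_iff x
    have hQn : ∀ a : G ⧸ K, n • a = 0 := by
      intro a
      obtain ⟨g, rfl⟩ := QuotientAddGroup.mk'_surjective K a
      rw [← map_nsmul]
      exact (hπ0 _).mpr (hK.1 g)
    have hQpure : ∀ m : ℕ, ∀ k ∈ HH, (∃ g : G ⧸ K, m • g = k) → ∃ h ∈ HH, m • h = k := by
      rintro m k hkH ⟨q, hq⟩
      obtain ⟨h, hhH, rfl⟩ := AddSubgroup.mem_map.mp hkH
      obtain ⟨y, rfl⟩ := QuotientAddGroup.mk'_surjective K q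
      have hmem : m • y - h ∈ K := by
        rw [← hπ0, map_sub, map_nsmul, hq, sub_self]
      obtain ⟨h', hh'H, hh'⟩ := hK.2.2 m y h hhH hmem
      refine ⟨π h', AddSubgroup.mem_map.mpr ⟨h', hh'H, rfl⟩, ?_⟩
      have : π (m • y - m • h') = 0 := (hπ0 _).mpr hh'
      rw [map_sub, map_nsmul, map_nsmul, sub_eq_zero, hq] at this
      exact this.symm
    have hQne : ∃ q : G ⧸ K, q ∉ HH := by
      refine ⟨π w, fun hmem => ?_⟩
      obtain ⟨h, hhH, hh⟩ := AddSubgroup.mem_map.mp hmem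
      have hwh : w - h ∈ K := by
        rw [← hπ0, map_sub, hh, sub_self]
      exact hw (AddSubgroup.mem_sup.mpr ⟨h, hhH, w - h, hwh, by abel⟩)
    obtain ⟨z, hzH, hzmul, hzmain⟩ := key_lemma n hn hQn HH hQpure hQne
    obtain ⟨z₀, hz₀⟩ := QuotientAddGroup.mk'_surjective K z
    set K' := K ⊔ AddSubgroup.zmultiples z₀ with hK'def
    have hKK' : K ≤ K' := le_sup_left
    have hK'𝒮 : K' ∈ 𝒮 := by
      refine ⟨fun g => hKK' (hK.1 g), ?_, ?_⟩
      · intro x hx hxH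
        obtain ⟨kk, hkk, ww, hww, hsum⟩ := AddSubgroup.mem_sup.mp hx
        obtain ⟨cc, hcc⟩ := AddSubgroup.mem_zmultiples_iff.mp hww
        have hπx : π x = cc • z := by
          rw [← hsum, map_add, (hπ0 kk).mpr hkk, zero_add, ← hcc, map_zsmul, hz₀]
        have hczH : cc • z ∈ HH := by
          rw [← hπx]
          exact AddSubgroup.mem_map.mpr ⟨x, hxH, rfl⟩
        have h0 : cc • z = 0 := hzmul cc hczH
        have hxK : x ∈ K := (hπ0 x).mp (by rw [hπx, h0])
        exact hK.2.1 x hxK hxH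
      · intro m y h hH hmem
        obtain ⟨kk, hkk, ww, hww, hsum⟩ := AddSubgroup.mem_sup.mp hmem
        obtain ⟨cc, hcc⟩ := AddSubgroup.mem_zmultiples_iff.mp hww
        have hπeq : π (m • y - h) = cc • z := by
          rw [← hsum, map_add, (hπ0 kk).mpr hkk, zero_add, ← hcc, map_zsmul, hz₀]
        rw [map_sub, map_nsmul] at hπeq
        have heqQ : (m : ℤ) • (π y) = π h + cc • z := by
          rw [natCast_zsmul, ← sub_eq_iff_eq_add'] at *
          exact hπeq
        obtain ⟨h'', hh''H, hfin⟩ := hzmain m (π y) (π h) cc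
          (AddSubgroup.mem_map.mpr ⟨h, hH, rfl⟩) heqQ
        obtain ⟨h', hh'H, hπh'⟩ := AddSubgroup.mem_map.mp hh''H
        refine ⟨h', hh'H, ?_⟩
        have hπfin : π (m • y - m • h' - cc • z₀) = 0 := by
          rw [map_sub, map_sub, map_nsmul, map_nsmul, map_zsmul, hz₀, hπh']
          rw [← natCast_zsmul (π y) m, ← natCast_zsmul h'' m, hfin, sub_self]
        have hKmem : m • y - m • h' - cc • z₀ ∈ K := (hπ0 _).mp hπfin
        have hrw : m • y - m • h' = (m • y - m • h' - cc • z₀) + cc • z₀ := by abel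
        rw [hrw]
        exact add_mem (hKK' hKmem)
          (AddSubgroup.mem_sup_right (AddSubgroup.zsmul_mem _ (AddSubgroup.mem_zmultiples z₀) cc))
    have hle : K' ≤ K := hKmax.2 hK'𝒮 hKK'
    have hz₀K : z₀ ∈ K := hle (AddSubgroup.mem_sup_right (AddSubgroup.mem_zmultiples z₀))
    apply hzH
    rw [← hz₀, (hπ0 z₀).mpr hz₀K]
    exact zero_mem HH
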